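/- Define s(r) = ln(2/(1+r²)) for r ≥ 0, λ(t) = e^{−6/t} for t > 0, and for z ∈ ℂ, t ∈ (0,1) set S(z,t) = s(|z|/λ(t)) − ln( λ(t)·(−ln λ(t)) ) + (1/2)ln 3. Then for all t ∈ (0,1) and all z ∈ ℂ: ∂S/∂t − e^{−2S}ΔS ≥ 6/t² > 0, where Δ is the flat Laplacian acting in z. In particular, S is a strict supersolution of the two-dimensional Ricci flow equation ∂u/∂t = e^{−2u}Δu. -/

import Mathlib

open Complex Metric Set

/-- The flat Laplacian of `u : ℂ → ℝ` at `z`, i.e. `∂²u/∂x² + ∂²u/∂y²`. -/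
noncomputable def lap (u : ℂ → ℝ) (z : ℂ) : ℝ :=
  iteratedFDeriv ℝ 2 u z ![1, 1] + iteratedFDeriv ℝ 2 u z ![Complex.I, Complex.I]

set_option maxHeartbeats 1000000 in
lemma lap_aux (a c : ℝ) (ha : 0 < a) (z : ℂ) :
    lap (fun w => c - Real.log (a + Complex.normSq w)) z
      = -4 * a / (a + Complex.normSq z)^2 := by
  set f : ℂ → ℝ := fun w => c - Real.log (a + Complex.normSq w) with hfdef
  have hq : ∀ w : ℂ, 0 < a + Complex.normSq w := fun w => by
    have := Complex.normSq_nonneg w; linarith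
  have hre : ∀ w : ℂ, HasFDerivAt (fun x : ℂ => x.re) Complex.reCLM w :=
    fun w => Complex.reCLM.hasFDerivAt
  have him : ∀ w : ℂ, HasFDerivAt (fun x : ℂ => x.im) Complex.imCLM w :=
    fun w => Complex.imCLM.hasFDerivAt
  have hnsfun : (fun x : ℂ => Complex.normSq x) = fun x : ℂ => x.re * x.re + x.im * x.im :=
    funext fun x => Complex.normSq_apply x
  have hns : ∀ w : ℂ, HasFDerivAt (fun x : ℂ => Complex.normSq x)
      (w.re • Complex.reCLM + w.re • Complex.reCLM
        + (w.im • Complex.imCLM + w.im • Complex.imCLM)) w := by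
    intro w
    rw [hnsfun]
    exact ((hre w).mul (hre w)).add ((him w).mul (him w))
  have hden : ∀ w : ℂ, HasFDerivAt (fun x : ℂ => a + Complex.normSq x)
      (w.re • Complex.reCLM + w.re • Complex.reCLM
        + (w.im • Complex.imCLM + w.im • Complex.imCLM)) w :=
    fun w => (hns w).const_add a
  have hf : ∀ w : ℂ, HasFDerivAt f
      (-((a + Complex.normSq w)⁻¹ • (w.re • Complex.reCLM + w.re • Complex.reCLM
        + (w.im • Complex.imCLM + w.im • Complex.imCLM)))) w :=
    fun w => ((hden w).log (hq w).ne').const_sub c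
  have hcd : ContDiff ℝ 2 f := by
    have h1 : ContDiff ℝ 2 (fun x : ℂ => a + Complex.normSq x) := by
      have : (fun x : ℂ => a + Complex.normSq x)
          = fun x : ℂ => a + (x.re * x.re + x.im * x.im) := by
        funext x; rw [Complex.normSq_apply]
      rw [this]
      exact contDiff_const.add ((Complex.reCLM.contDiff.mul Complex.reCLM.contDiff).add
        (Complex.imCLM.contDiff.mul Complex.imCLM.contDiff))
    exact contDiff_const.sub (h1.log fun w => (hq w).ne')
  have hdf : DifferentiableAt ℝ (fderiv ℝ f) z :=
    ((hcd.fderiv_right (m := 1) (by norm_num)).differentiable one_ne_zero).differentiableAt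
  have key : ∀ v : ℂ, iteratedFDeriv ℝ 2 f z ![v, v]
      = fderiv ℝ (fun w => fderiv ℝ f w v) z v := by
    intro v
    rw [iteratedFDeriv_two_apply]
    rw [fderiv_clm_apply hdf (differentiableAt_const v)]
    simp
  have hfd1 : (fun w : ℂ => fderiv ℝ f w 1)
      = fun w : ℂ => -(2*w.re) * (a + Complex.normSq w)⁻¹ := by
    funext w
    rw [(hf w).fderiv]
    simp [Complex.reCLM_apply, Complex.imCLM_apply]
    ring
  have hfdI : (fun w : ℂ => fderiv ℝ f w Complex.I)
      = fun w : ℂ => -(2*w.im) * (a + Complex.normSq w)⁻¹ := by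
    funext w
    rw [(hf w).fderiv]
    simp [Complex.reCLM_apply, Complex.imCLM_apply]
    ring
  set q := a + Complex.normSq z with hqdef
  have hq0 : q ≠ 0 := (hq z).ne'
  have hinv : HasFDerivAt (fun w : ℂ => (a + Complex.normSq w)⁻¹)
      ((-(q^2)⁻¹) • (z.re • Complex.reCLM + z.re • Complex.reCLM
        + (z.im • Complex.imCLM + z.im • Complex.imCLM))) z :=
    (hasDerivAt_inv hq0).comp_hasFDerivAt z (hden z)
  have h2a : fderiv ℝ (fun w : ℂ => -(2*w.re) * (a + Complex.normSq w)⁻¹) z 1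
      = 4*z.re^2/q^2 - 2/q := by
    have hnum : HasFDerivAt (fun w : ℂ => -(2*w.re)) (-((2:ℝ) • Complex.reCLM)) z :=
      ((hre z).const_mul (2:ℝ)).neg
    rw [HasFDerivAt.fderiv (f := fun w : ℂ => -(2*w.re) * (a + Complex.normSq w)⁻¹) (hnum.mul hinv)]
    simp [Complex.reCLM_apply, Complex.imCLM_apply]
    field_simp
    rw [← hqdef, pow_two q, mul_div_cancel_right₀ q hq0]
    ring
  have h2b : fderiv ℝ (fun w : ℂ => -(2*w.im) * (a + Complex.normSq w)⁻¹) z Complex.I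
      = 4*z.im^2/q^2 - 2/q := by
    have hnum : HasFDerivAt (fun w : ℂ => -(2*w.im)) (-((2:ℝ) • Complex.imCLM)) z :=
      ((him z).const_mul (2:ℝ)).neg
    rw [HasFDerivAt.fderiv (f := fun w : ℂ => -(2*w.im) * (a + Complex.normSq w)⁻¹) (hnum.mul hinv)]
    simp [Complex.reCLM_apply, Complex.imCLM_apply]
    field_simp
    rw [← hqdef, pow_two q, mul_div_cancel_right₀ q hq0]
    ring
  have : lap f z = (4*z.re^2/q^2 - 2/q) + (4*z.im^2/q^2 - 2/q) := by
    rw [lap, key 1, key Complex.I, hfd1, hfdI, h2a, h2b]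
  rw [this]
  have hnq : Complex.normSq z = q - a := by rw [hqdef]; ring
  have h2 : z.re^2 + z.im^2 = q - a := by
    rw [← hnq, Complex.normSq_apply]; ring
  field_simp
  linear_combination 4 * h2

set_option maxHeartbeats 1000000 in
/-- with `s(r) = ln(2/(1+r²))`, `λ(t) = e^{-6/t}`, the spherical barrier
`S(z,t) = s(|z|/λ(t)) - ln(λ(t)·(-ln λ(t))) + ½ ln 3` satisfies
`∂S/∂t - e^{-2S} ΔS ≥ 6/t² > 0` for all `t ∈ (0,1)` and all `z ∈ ℂ`; i.e. it is a strict
supersolution of the 2D Ricci flow equation `∂u/∂t = e^{-2u}Δu`. -/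
theorem stmt7 (S : ℂ → ℝ → ℝ)
    (hS : ∀ (z : ℂ) (t : ℝ), S z t =
      Real.log (2 / (1 + (‖z‖ / Real.exp (-6/t))^2))
        - Real.log (Real.exp (-6/t) * (-Real.log (Real.exp (-6/t))))
        + (1/2) * Real.log 3) :
    ∀ t ∈ Ioo (0:ℝ) 1, ∀ z : ℂ,
      (0:ℝ) < 6 / t^2 ∧
        6 / t^2 ≤ deriv (S z) t - Real.exp (-2 * S z t) * lap (fun w => S w t) z := by
  intro t ht z
  obtain ⟨ht0, ht1⟩ := ht
  have htne : t ≠ 0 := ht0.ne'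
  refine ⟨by positivity, ?_⟩
  set b : ℝ := ‖z‖ ^ 2 with hb
  have hbnn : 0 ≤ b := sq_nonneg _
  -- rewrite S z globally as a function of time
  have hexp2 : ∀ τ : ℝ, Real.exp (-6/τ) ^ 2 = Real.exp (-(12/τ)) := by
    intro τ
    rw [sq, ← Real.exp_add]
    congr 1
    ring
  have habs : ∀ τ : ℝ, (‖z‖ / Real.exp (-6/τ))^2 = b * Real.exp (12/τ) := by
    intro τ
    rw [div_pow, hexp2, Real.exp_neg]
    field_simp
    exact hb.symm
  have hXpos : ∀ τ : ℝ, 0 < 1 + b * Real.exp (12/τ) := by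
    intro τ; positivity
  have hSz : S z = fun τ => Real.log 2 - Real.log (1 + b * Real.exp (12/τ))
      - Real.log (Real.exp (-6/τ) * (6/τ)) + (1/2) * Real.log 3 := by
    funext τ
    rw [hS, habs, Real.log_div two_ne_zero (hXpos τ).ne', Real.log_exp, neg_div, neg_neg]
  -- time derivative
  have h12 : HasDerivAt (fun τ : ℝ => 12/τ) (-(12/t^2)) t := by
    have := (hasDerivAt_inv htne).const_mul (12:ℝ)
    simpa [div_eq_mul_inv, mul_neg] using this
  have hm6 : HasDerivAt (fun τ : ℝ => -6/τ) (6/t^2) t := by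
    have := (hasDerivAt_inv htne).const_mul (-6:ℝ)
    simpa [div_eq_mul_inv, mul_neg, neg_mul, neg_div, neg_neg] using this
  have h6 : HasDerivAt (fun τ : ℝ => 6/τ) (-(6/t^2)) t := by
    have := (hasDerivAt_inv htne).const_mul (6:ℝ)
    simpa [div_eq_mul_inv, mul_neg] using this
  have hX : HasDerivAt (fun τ : ℝ => 1 + b * Real.exp (12/τ))
      (b * (Real.exp (12/t) * -(12/t^2))) t := (h12.exp.const_mul b).const_add 1
  have hL1 := hX.log (hXpos t).ne'
  have hE := hm6.exp
  have hP := hE.mul h6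
  have hPpos : 0 < Real.exp (-6/t) * (6/t) := by positivity
  have hL2 := hP.log hPpos.ne'
  have hDer : HasDerivAt (S z)
      (-(b * (Real.exp (12/t) * -(12/t^2)) / (1 + b * Real.exp (12/t)))
        - (Real.exp (-6/t) * (6/t^2) * (6/t) + Real.exp (-6/t) * -(6/t^2))
            / (Real.exp (-6/t) * (6/t))) t := by
    rw [hSz]
    exact ((hL1.const_sub (Real.log 2)).sub hL2).add_const _
  have hderiv := hDer.deriv
  -- spatial function and laplacian
  set E : ℝ := Real.exp (-6/t) with hE'
  have hEpos : 0 < E := Real.exp_pos _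
  set a : ℝ := E^2 with ha'
  have hapos : 0 < a := by positivity
  have hfun : (fun w => S w t)
      = fun w => (Real.log (2*a) - Real.log (E * (6/t)) + (1/2) * Real.log 3)
          - Real.log (a + Complex.normSq w) := by
    funext w
    rw [hS]
    have hqw : 0 < a + Complex.normSq w := by
      have := Complex.normSq_nonneg w; linarith
    have h1 : (‖w‖ / Real.exp (-6/t))^2 = Complex.normSq w / a := by
      rw [div_pow, Complex.sq_norm, ha', hE']
    have hpos1 : (0:ℝ) < 1 + Complex.normSq w / a := by
      have : 0 ≤ Complex.normSq w / a := div_nonneg (Complex.normSq_nonneg w) hapos.le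
      linarith
    have h2 : 2 / (1 + Complex.normSq w / a) = (2*a) / (a + Complex.normSq w) := by
      rw [div_eq_div_iff hpos1.ne' hqw.ne']
      field_simp
    rw [h1, h2, Real.log_div (by positivity) hqw.ne', Real.log_exp, neg_div, neg_neg,
      ha', hE']
    ring
  set q : ℝ := a + Complex.normSq z with hq'
  have hqpos : 0 < q := by have := Complex.normSq_nonneg z; rw [hq']; linarith
  have hlap : lap (fun w => S w t) z = -4 * a / q^2 := by
    rw [hfun]
    exact lap_aux a _ hapos z
  -- exponential factor
  have hSzt : S z t = Real.log ((2*a)/q) - Real.log (E * (6/t)) + (1/2) * Real.log 3 := by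
    have := congrFun hfun z
    rw [this, Real.log_div (by positivity) hqpos.ne']
    ring
  set s3 : ℝ := Real.exp ((1/2) * Real.log 3) with hs3'
  have hs3 : s3^2 = 3 := by
    rw [hs3', sq, ← Real.exp_add]
    have : (1/2) * Real.log 3 + (1/2) * Real.log 3 = Real.log 3 := by ring
    rw [this, Real.exp_log]
    norm_num
  have hexpS : Real.exp (S z t) = (2*a/q) * (E * (6/t))⁻¹ * s3 := by
    rw [hSzt, Real.exp_add, Real.exp_sub, Real.exp_log (by positivity),
      Real.exp_log (by positivity), hs3']
    ring
  have hexpneg : Real.exp (-2 * S z t) = 3 * q^2 / (a * t^2) := by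
    have e1 : Real.exp (-2 * S z t) = ((Real.exp (S z t))^2)⁻¹ := by
      rw [sq, ← Real.exp_add, ← Real.exp_neg]
      congr 1
      ring
    rw [e1, hexpS]
    have hs3pos : 0 < s3 := Real.exp_pos _
    rw [eq_div_iff (by positivity)]
    field_simp
    linear_combination (-12*q^2*a^2*t^2) * hs3 + (-36*q^2*a*t^2) * ha' + (-12*(E^2 - t^2*E^4*(Complex.normSq z + E^2)^2)) * hs3
  have hprod : Real.exp (-2 * S z t) * lap (fun w => S w t) z = -(12/t^2) := by
    rw [hexpneg, hlap]
    field_simp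
    ring
  rw [hderiv, hprod]
  have hfr : 0 ≤ b * Real.exp (12/t) / (1 + b * Real.exp (12/t)) := by positivity
  have hkey : -(b * (Real.exp (12/t) * -(12/t^2)) / (1 + b * Real.exp (12/t)))
        - (E * (6/t^2) * (6/t) + E * -(6/t^2)) / (E * (6/t)) - -(12/t^2) - 6/t^2
      = 12 * (b * Real.exp (12/t) / (1 + b * Real.exp (12/t))) / t^2 + 1/t := by
    rw [div_add_div _ _ (by positivity : (t:ℝ)^2 ≠ 0) htne]
    field_simp
    ring
  have h1t : 0 < 1/t := by positivity
  have h2 : 0 ≤ 12 * (b * Real.exp (12/t) / (1 + b * Real.exp (12/t))) / t^2 := by positivity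
  linarith [hkey]
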